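/- Fix 0 < p ≤ 1, let n ≥ 1 and let A ⊆ C_n be a nonempty subset. Set ρ = p/2 − Δ(A,p)/n. Then ρ²/p ≤ (ln|A|)/n. -/

import Mathlib

/-- The randomized Hamming distance `d_l(x,y) = Σ_{i : x i ≠ y i} l i`, where the coordinates
with `l i = 1` are the ones that are counted. -/
def dl {ι : Type*} [Fintype ι] (l x y : ι → Bool) : ℕ :=
  (Finset.univ.filter fun i => x i ≠ y i ∧ l i = true).card

/-- The randomized Hamming distance from a point `x` to a subset `A`:
`d_l(x,A) = min_{y ∈ A} d_l(x,y)`. -/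
noncomputable def dlToSet {ι : Type*} [Fintype ι] (l x : ι → Bool) (A : Set (ι → Bool)) : ℕ :=
  sInf ((fun y => dl l x y) '' A)

/-- The probability `p^{|l|}(1-p)^{n-|l|}` of the vector `l` of `n` independent
Bernoulli(p) coordinates. -/
noncomputable def bernWeight {ι : Type*} [Fintype ι] (p : ℝ) (l : ι → Bool) : ℝ :=
  p ^ (Finset.univ.filter fun i => l i = true).card *
    (1 - p) ^ (Finset.univ.filter fun i => l i = false).card

/-- `Δ(A,p)`: the expectation of `d_l(x,A)` when `x` is uniform on the cube and `l` has
independent Bernoulli(p) coordinates. -/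
noncomputable def avgDistP {ι : Type*} [Fintype ι] [DecidableEq ι] (p : ℝ)
    (A : Set (ι → Bool)) : ℝ :=
  ∑ l : ι → Bool, ∑ x : ι → Bool,
    (bernWeight p l / 2 ^ Fintype.card ι) * (dlToSet l x A : ℝ)

set_option linter.unusedSectionVars false

section aux
variable {ι : Type*} [Fintype ι] [DecidableEq ι]

lemma sum_prod_bool (F : ι → Bool → ℝ) :
    ∑ l : ι → Bool, ∏ i, F i (l i) = ∏ i, (F i true + F i false) := by
  rw [← Fintype.prod_sum (κ := fun _ : ι => Bool) F]
  exact Finset.prod_congr rfl fun i _ => by simp [add_comm]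

lemma bern_prod (p : ℝ) (l : ι → Bool) :
    bernWeight p l = ∏ i, (if l i = true then p else 1 - p) := by
  rw [bernWeight, Finset.prod_ite]
  simp [Finset.prod_const, Bool.not_eq_true]

lemma dl_cast (l x y : ι → Bool) :
    (dl l x y : ℝ) = ∑ i, (if x i ≠ y i ∧ l i = true then (1:ℝ) else 0) := by
  rw [dl, Finset.card_filter]
  push_cast
  rfl

lemma exp_dl (lam : ℝ) (l x y : ι → Bool) :
    Real.exp (-lam * dl l x y)
      = ∏ i, Real.exp (-lam * (if x i ≠ y i ∧ l i = true then (1:ℝ) else 0)) := by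
  rw [← Real.exp_sum, ← Finset.mul_sum, ← dl_cast]

end aux

section aux2
variable {ι : Type*} [Fintype ι] [DecidableEq ι]

lemma mgf_l (p lam : ℝ) (x y : ι → Bool) :
    ∑ l : ι → Bool, bernWeight p l * Real.exp (-lam * dl l x y)
      = ∏ i, ((1 - p) + p * Real.exp (-lam * (if x i ≠ y i then (1:ℝ) else 0))) := by
  have h : ∀ l : ι → Bool, bernWeight p l * Real.exp (-lam * dl l x y)
      = ∏ i, ((if l i = true then p else 1 - p) *
          Real.exp (-lam * (if x i ≠ y i ∧ l i = true then (1:ℝ) else 0))) := by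
    intro l
    rw [bern_prod, exp_dl, Finset.prod_mul_distrib]
  rw [Finset.sum_congr rfl fun l _ => h l,
    sum_prod_bool fun i b => (if b = true then p else 1 - p) *
      Real.exp (-lam * (if x i ≠ y i ∧ b = true then (1:ℝ) else 0))]
  refine Finset.prod_congr rfl fun i _ => ?_
  by_cases hxy : x i = y i <;> simp [hxy] <;> ring

lemma mgf_x (p lam : ℝ) (y : ι → Bool) :
    ∑ x : ι → Bool, ∏ i, ((1 - p) + p * Real.exp (-lam * (if x i ≠ y i then (1:ℝ) else 0)))
      = (2 - p + p * Real.exp (-lam)) ^ Fintype.card ι := by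
  rw [sum_prod_bool fun i b => (1 - p) + p * Real.exp (-lam * (if b ≠ y i then (1:ℝ) else 0))]
  have : ∀ i : ι, ((1 - p) + p * Real.exp (-lam * (if (true : Bool) ≠ y i then (1:ℝ) else 0)))
      + ((1 - p) + p * Real.exp (-lam * (if (false : Bool) ≠ y i then (1:ℝ) else 0)))
      = 2 - p + p * Real.exp (-lam) := by
    intro i; cases hy : y i <;> simp [hy] <;> ring
  rw [Finset.prod_congr rfl fun i _ => this i, Finset.prod_const, Finset.card_univ]

lemma sum_bern (p : ℝ) :
    ∑ l : ι → Bool, bernWeight p l = 1 := by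
  have : ∀ l : ι → Bool, bernWeight p l = ∏ i, (if l i = true then p else 1 - p) :=
    fun l => bern_prod p l
  rw [Finset.sum_congr rfl fun l _ => this l,
    sum_prod_bool fun i b => if b = true then p else 1 - p]
  simp

lemma sum_single_coord (i : ι) (g : Bool → ℝ) :
    ∑ x : ι → Bool, g (x i) = (g true + g false) * 2 ^ Fintype.card ι / 2 := by
  have h : ∀ x : ι → Bool, g (x i) = ∏ j, (if j = i then g (x j) else 1) := by
    intro x
    rw [Fintype.prod_ite_eq' i fun j => g (x j)]
  rw [Finset.sum_congr rfl fun x _ => h x,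
    sum_prod_bool fun j b => if j = i then g b else 1]
  have h2 : ∀ j : ι, ((if j = i then g true else 1) + (if j = i then g false else 1))
      = (if j = i then (g true + g false) / 2 else 1) * 2 := by
    intro j; by_cases hj : j = i <;> simp [hj] <;> ring
  rw [Finset.prod_congr rfl fun j _ => h2 j, Finset.prod_mul_distrib,
    Fintype.prod_ite_eq' i fun _ => (g true + g false) / 2, Finset.prod_const,
    Finset.card_univ]
  ring

end aux2

section main
variable {ι : Type*} [Fintype ι] [DecidableEq ι]

lemma bern_nonneg {p : ℝ} (hp0 : 0 ≤ p) (hp1 : p ≤ 1) (l : ι → Bool) :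
    0 ≤ bernWeight p l :=
  mul_nonneg (pow_nonneg hp0 _) (pow_nonneg (by linarith) _)

lemma dlToSet_attained (l x : ι → Bool) {A : Set (ι → Bool)} (hA : A.Nonempty) :
    ∃ y ∈ A, dl l x y = dlToSet l x A := by
  have h := Nat.sInf_mem (hA.image fun y => dl l x y)
  obtain ⟨y, hy, hdy⟩ := h
  exact ⟨y, hy, hdy⟩

lemma dlToSet_le (l x : ι → Bool) {A : Set (ι → Bool)} {y : ι → Bool} (hy : y ∈ A) :
    dlToSet l x A ≤ dl l x y :=
  Nat.sInf_le (Set.mem_image_of_mem _ hy)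

/-- Jensen + union bound + tensorization. -/
lemma mgf_bound {p : ℝ} (hp0 : 0 ≤ p) (hp1 : p ≤ 1) {lam : ℝ}
    {A : Set (ι → Bool)} (hA : A.Nonempty) :
    Real.exp (-lam * avgDistP p A)
      ≤ (A.toFinite.toFinset.card : ℝ)
        * ((2 - p + p * Real.exp (-lam)) / 2) ^ Fintype.card ι := by
  set N := Fintype.card ι
  have h2N : (0:ℝ) < 2 ^ N := by positivity
  have hw : ∀ l : ι → Bool, 0 ≤ bernWeight p l / 2 ^ N :=
    fun l => div_nonneg (bern_nonneg hp0 hp1 l) h2N.le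
  -- weights sum to 1
  have hsum : ∑ lx : (ι → Bool) × (ι → Bool), bernWeight p lx.1 / 2 ^ N = 1 := by
    rw [Fintype.sum_prod_type]
    have : ∀ l : ι → Bool, ∑ _x : ι → Bool, bernWeight p l / 2 ^ N = bernWeight p l := by
      intro l
      rw [Finset.sum_const, Finset.card_univ, Fintype.card_fun, Fintype.card_bool,
        nsmul_eq_mul]
      push_cast
      field_simp
      exact mul_comm _ _
    rw [Finset.sum_congr rfl fun l _ => this l, sum_bern]
  -- Jensen
  have hjensen : Real.exp (-lam * avgDistP p A)
      ≤ ∑ lx : (ι → Bool) × (ι → Bool),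
          (bernWeight p lx.1 / 2 ^ N) * Real.exp (-lam * (dlToSet lx.1 lx.2 A : ℝ)) := by
    have h := convexOn_exp.map_sum_le (t := (Finset.univ : Finset ((ι → Bool) × (ι → Bool))))
      (w := fun lx => bernWeight p lx.1 / 2 ^ N)
      (p := fun lx => -lam * (dlToSet lx.1 lx.2 A : ℝ))
      (fun lx _ => hw lx.1) hsum (fun _ _ => Set.mem_univ _)
    simp only [smul_eq_mul] at h
    have heq : ∑ lx : (ι → Bool) × (ι → Bool),
        (bernWeight p lx.1 / 2 ^ N) * (-lam * (dlToSet lx.1 lx.2 A : ℝ))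
        = -lam * avgDistP p A := by
      rw [avgDistP, Fintype.sum_prod_type, Finset.mul_sum]
      refine Finset.sum_congr rfl fun l _ => ?_
      rw [Finset.mul_sum]
      exact Finset.sum_congr rfl fun x _ => by ring
    rwa [heq] at h
  refine hjensen.trans ?_
  -- union bound pointwise
  set A' := A.toFinite.toFinset with hA'
  have hub : ∀ lx : (ι → Bool) × (ι → Bool),
      (bernWeight p lx.1 / 2 ^ N) * Real.exp (-lam * (dlToSet lx.1 lx.2 A : ℝ))
      ≤ (bernWeight p lx.1 / 2 ^ N) * ∑ y ∈ A', Real.exp (-lam * (dl lx.1 lx.2 y : ℝ)) := by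
    rintro ⟨l, x⟩
    refine mul_le_mul_of_nonneg_left ?_ (hw l)
    obtain ⟨y₀, hy₀, hdy₀⟩ := dlToSet_attained l x hA
    rw [← hdy₀]
    exact Finset.single_le_sum (f := fun y => Real.exp (-lam * (dl l x y : ℝ)))
      (fun _ _ => Real.exp_nonneg _)
      (by simpa [hA'] using hy₀)
  refine (Finset.sum_le_sum fun lx _ => hub lx).trans ?_
  -- compute
  have hswap : ∑ lx : (ι → Bool) × (ι → Bool),
      (bernWeight p lx.1 / 2 ^ N) * ∑ y ∈ A', Real.exp (-lam * (dl lx.1 lx.2 y : ℝ))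
      = ∑ y ∈ A', (∑ x : ι → Bool, ∑ l : ι → Bool,
          bernWeight p l * Real.exp (-lam * (dl l x y : ℝ))) / 2 ^ N := by
    simp only [Finset.mul_sum]
    rw [Finset.sum_comm]
    refine Finset.sum_congr rfl fun y _ => ?_
    rw [Fintype.sum_prod_type, Finset.sum_comm, Finset.sum_div]
    refine Finset.sum_congr rfl fun x _ => ?_
    rw [Finset.sum_div]
    exact Finset.sum_congr rfl fun l _ => by ring
  rw [hswap]
  have hval : ∀ y : ι → Bool,
      (∑ x : ι → Bool, ∑ l : ι → Bool,
          bernWeight p l * Real.exp (-lam * (dl l x y : ℝ))) / 2 ^ N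
      = ((2 - p + p * Real.exp (-lam)) / 2) ^ N := by
    intro y
    rw [Finset.sum_congr rfl fun x _ => mgf_l p lam x y, mgf_x p lam y, div_pow]
  rw [Finset.sum_congr rfl fun y _ => hval y, Finset.sum_const, nsmul_eq_mul]

end main

section mean
variable {ι : Type*} [Fintype ι] [DecidableEq ι]

lemma sum_bern_coord {p : ℝ} (i : ι) :
    ∑ l : ι → Bool, bernWeight p l * (if l i = true then (1:ℝ) else 0) = p := by
  have h : ∀ l : ι → Bool, bernWeight p l * (if l i = true then (1:ℝ) else 0)
      = ∏ j, ((if l j = true then p else 1 - p) * (if j = i then (if l j = true then (1:ℝ) else 0) else 1)) := by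
    intro l
    rw [Finset.prod_mul_distrib, ← bern_prod,
      Fintype.prod_ite_eq' i fun j => (if l j = true then (1:ℝ) else 0)]
  rw [Finset.sum_congr rfl fun l _ => h l,
    sum_prod_bool fun j b => (if b = true then p else 1 - p) * (if j = i then (if b = true then (1:ℝ) else 0) else 1)]
  have h2 : ∀ j : ι, ((if (true:Bool) = true then p else 1 - p) * (if j = i then (if (true:Bool) = true then (1:ℝ) else 0) else 1))
      + ((if (false:Bool) = true then p else 1 - p) * (if j = i then (if (false:Bool) = true then (1:ℝ) else 0) else 1))
      = if j = i then p else 1 := by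
    intro j; by_cases hj : j = i <;> simp [hj]
  rw [Finset.prod_congr rfl fun j _ => h2 j, Fintype.prod_ite_eq' i fun _ => p]

lemma avg_le {p : ℝ} (hp0 : 0 ≤ p) (hp1 : p ≤ 1) {A : Set (ι → Bool)} (hA : A.Nonempty) :
    avgDistP p A ≤ Fintype.card ι * p / 2 := by
  obtain ⟨y₀, hy₀⟩ := hA
  set N := Fintype.card ι
  have h2N : (0:ℝ) < 2 ^ N := by positivity
  have hle : avgDistP p A ≤ ∑ l : ι → Bool, ∑ x : ι → Bool,
      (bernWeight p l / 2 ^ N) * (dl l x y₀ : ℝ) := by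
    refine Finset.sum_le_sum fun l _ => Finset.sum_le_sum fun x _ => ?_
    refine mul_le_mul_of_nonneg_left ?_ (div_nonneg (bern_nonneg hp0 hp1 l) h2N.le)
    exact_mod_cast dlToSet_le l x hy₀
  refine hle.trans ?_
  have hx : ∀ l : ι → Bool, ∑ x : ι → Bool, (dl l x y₀ : ℝ)
      = (∑ i, (if l i = true then (1:ℝ) else 0)) * 2 ^ N / 2 := by
    intro l
    rw [Finset.sum_congr rfl fun x _ => dl_cast l x y₀, Finset.sum_comm]
    rw [Finset.sum_mul, Finset.sum_div]
    refine Finset.sum_congr rfl fun i _ => ?_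
    rw [sum_single_coord i fun b => (if b ≠ y₀ i ∧ l i = true then (1:ℝ) else 0)]
    cases hy : y₀ i <;> by_cases hl : l i = true <;> simp [hy, hl] <;> rfl
  have hstep : ∀ l : ι → Bool, ∑ x : ι → Bool, (bernWeight p l / 2 ^ N) * (dl l x y₀ : ℝ)
      = ∑ i, bernWeight p l * (if l i = true then (1:ℝ) else 0) / 2 := by
    intro l
    rw [← Finset.mul_sum, hx l, ← Finset.sum_div, ← Finset.mul_sum]
    field_simp
  rw [Finset.sum_congr rfl fun l _ => hstep l, Finset.sum_comm]
  have : ∀ i : ι, ∑ l : ι → Bool, bernWeight p l * (if l i = true then (1:ℝ) else 0) / 2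
      = p / 2 := by
    intro i
    rw [← Finset.sum_div, sum_bern_coord i]
  rw [Finset.sum_congr rfl fun i _ => this i, Finset.sum_const, Finset.card_univ,
    nsmul_eq_mul]
  rw [mul_div_assoc]

end mean

/-- Quadratic upper bound for `exp (-x)`, `x ≥ 0`. -/
lemma exp_neg_le_quadratic {x : ℝ} (hx : 0 ≤ x) :
    Real.exp (-x) ≤ 1 - x + x ^ 2 / 2 := by
  have key : ∀ t : ℝ, HasDerivAt (fun s => (1 - s + s ^ 2 / 2) * Real.exp s)
      (t ^ 2 / 2 * Real.exp t) t := by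
    intro t
    have h1 : HasDerivAt (fun s : ℝ => 1 - s + s ^ 2 / 2) (-1 + 2 * t ^ 1 / 2) t := by
      exact (((hasDerivAt_id t).const_sub 1).add ((hasDerivAt_pow 2 t).div_const 2))
    have h2 := (h1.mul (Real.hasDerivAt_exp t))
    have e : t ^ 2 / 2 * Real.exp t = (-1 + 2 * t ^ 1 / 2) * Real.exp t + (1 - t + t ^ 2 / 2) * Real.exp t := by ring
    rw [e]; exact h2
  have hmono : MonotoneOn (fun s => (1 - s + s ^ 2 / 2) * Real.exp s) (Set.Ici 0) := by
    refine monotoneOn_of_deriv_nonneg (convex_Ici 0) ?_ ?_ ?_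
    · exact Continuous.continuousOn (by continuity)
    · exact fun t _ => (key t).differentiableAt.differentiableWithinAt
    · intro t _
      rw [(key t).deriv]
      positivity
  have h := hmono (Set.self_mem_Ici) (Set.mem_Ici.mpr hx) hx
  have h1 : (1:ℝ) ≤ (1 - x + x ^ 2 / 2) * Real.exp x := by simpa using h
  have hex : 0 < Real.exp x := Real.exp_pos x
  calc Real.exp (-x) = 1 / Real.exp x := by rw [Real.exp_neg, one_div]
    _ ≤ 1 - x + x ^ 2 / 2 := by rw [div_le_iff₀ hex]; linarith [h1]


/-- Inequality (4.5.1): for `0 < p ≤ 1`, nonempty `A ⊆ C_n` and `ρ = p/2 - Δ(A,p)/n`,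
one has `ρ²/p ≤ (ln |A|)/n`. -/
theorem stmt7 (p : ℝ) (hp0 : 0 < p) (hp1 : p ≤ 1) {n : ℕ} (hn : 1 ≤ n)
    (A : Set (Fin n → Bool)) (hA : A.Nonempty)
    (ρ : ℝ) (hρ : ρ = p / 2 - avgDistP p A / n) :
    ρ ^ 2 / p ≤ Real.log (Nat.card A) / n := by

  have hN : Fintype.card (Fin n) = n := Fintype.card_fin n
  set K : ℕ := A.toFinite.toFinset.card with hK
  have hcard : (Nat.card A : ℝ) = (K : ℝ) := by
    rw [Nat.card_coe_set_eq, Set.ncard_eq_toFinset_card A A.toFinite]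
  have hK1 : 1 ≤ K := Finset.card_pos.mpr (A.toFinite.toFinset_nonempty.mpr hA)
  have hKpos : (0:ℝ) < K := by exact_mod_cast hK1
  have hlogK : 0 ≤ Real.log K := Real.log_nonneg (by exact_mod_cast hK1)
  have hnpos : (0:ℝ) < n := by exact_mod_cast hn
  -- central estimate
  have hstar : ∀ lam : ℝ, 0 < lam →
      lam * n * ρ ≤ Real.log K + n * p * lam ^ 2 / 4 := by
    intro lam hlam
    have hE0 : 0 < Real.exp (-lam) := Real.exp_pos _
    set B : ℝ := (2 - p + p * Real.exp (-lam)) / 2 with hB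
    have hBpos : 0 < B := by
      have : 0 ≤ p * Real.exp (-lam) := mul_nonneg hp0.le hE0.le
      rw [hB]; nlinarith
    have hmgf := mgf_bound (ι := Fin n) hp0.le hp1 (lam := lam) hA
    rw [hN] at hmgf
    have h1 : -lam * avgDistP p A ≤ Real.log K + n * Real.log B := by
      have h2 : -lam * avgDistP p A ≤ Real.log ((K : ℝ) * B ^ n) := by
        rw [← Real.log_exp (-lam * avgDistP p A)]
        exact Real.log_le_log (Real.exp_pos _) hmgf
      rwa [Real.log_mul (ne_of_gt hKpos) (ne_of_gt (pow_pos hBpos n)),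
        Real.log_pow] at h2
    have hlogB : Real.log B ≤ B - 1 := Real.log_le_sub_one_of_pos hBpos
    have hquad := exp_neg_le_quadratic hlam.le
    have hB1 : B - 1 ≤ p * (lam ^ 2 / 2 - lam) / 2 := by
      rw [hB]
      have := mul_le_mul_of_nonneg_left hquad hp0.le
      nlinarith
    have hΔ : avgDistP p A = n * (p / 2 - ρ) := by
      rw [hρ]; field_simp; ring
    rw [hΔ] at h1
    have hn' : 0 ≤ n * Real.log B → True := fun _ => trivial
    nlinarith [mul_le_mul_of_nonneg_left (hlogB.trans hB1) hnpos.le]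
  -- ρ ≥ 0
  have hρ0 : 0 ≤ ρ := by
    have h := avg_le (ι := Fin n) hp0.le hp1 hA
    rw [hN] at h
    rw [hρ]
    rw [sub_nonneg, div_le_iff₀ hnpos]
    calc avgDistP p A ≤ n * p / 2 := h
      _ = p / 2 * n := by ring
  rcases eq_or_lt_of_le hρ0 with h0 | hpos
  · rw [← h0, hcard]
    have h00 : ((0:ℝ)) ^ 2 / p = 0 := by simp
    rw [h00]
    exact div_nonneg hlogK hnpos.le
  · have hlam : 0 < 2 * ρ / p := by positivity
    have h := hstar (2 * ρ / p) hlam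
    rw [div_le_div_iff₀ hp0 hnpos]
    have hexp : (2 * ρ / p) ^ 2 = 4 * ρ ^ 2 / p ^ 2 := by
      field_simp; ring
    rw [hexp] at h
    have hp2 : (0:ℝ) < p ^ 2 := by positivity
    -- h : 2ρ/p * n * ρ ≤ log K + n * p * (4ρ²/p²) / 4
    have h2 : 2 * ρ ^ 2 * n / p ≤ Real.log K + n * ρ ^ 2 / p := by
      calc 2 * ρ ^ 2 * n / p = 2 * ρ / p * n * ρ := by field_simp
        _ ≤ Real.log K + n * p * (4 * ρ ^ 2 / p ^ 2) / 4 := h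
        _ = Real.log K + n * ρ ^ 2 / p := by field_simp
    rw [hcard]
    have h3 : ρ ^ 2 * n / p ≤ Real.log K := by
      have e1 : 2 * ρ ^ 2 * (n:ℝ) / p = 2 * (ρ ^ 2 * n / p) := by ring
      have e2 : (n:ℝ) * ρ ^ 2 / p = ρ ^ 2 * n / p := by ring
      rw [e1, e2] at h2
      linarith
    calc ρ ^ 2 * (n:ℝ) = ρ ^ 2 * n / p * p := by field_simp
      _ ≤ Real.log K * p := mul_le_mul_of_nonneg_right h3 hp0.le
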